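/- Let Kol : ℕ → ℕ be Kolmogorov complexity with respect to a fixed universal partial computable function (Kol(x) is the least code of a program that outputs x). Then for every computably enumerable set W ⊆ ℕ × ℕ such that every pair (L, x) ∈ W satisfies L ≤ Kol(x), there exists a bound B ∈ ℕ such that L ≤ B for all (L, x) ∈ W. (This is the computational content of Chaitin's incompleteness theorem: an effective consistent theory T can prove statements of the form 'L ≤ Kol(x)' only for L below a fixed bound 𝓛(T) depending only on T.) -/

import Mathlib

namespace NumbersExtensions

noncomputable def Kol (x : ℕ) : ℕ :=
  sInf {c : ℕ | (Denumerable.ofNat Nat.Partrec.Code c).eval 0 = Part.some x}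

open Nat.Partrec (Code)
open Nat.Partrec.Code

theorem chaitin_incompleteness (W : Set (ℕ × ℕ))
    (hce : ∃ f : ℕ →. ℕ × ℕ, Partrec f ∧ W = {p | ∃ n, p ∈ f n})
    (hW : ∀ p ∈ W, p.1 ≤ Kol p.2) :
    ∃ B : ℕ, ∀ p ∈ W, p.1 ≤ B := by
  by_contra hB
  push_neg at hB
  obtain ⟨f₀, hf₀, rfl⟩ := hce
  -- a code for the enumeration of `W`
  have hnat : Nat.Partrec fun n => (f₀ n).map Encodable.encode := by
    have := hf₀; unfold Partrec at this; simpa using this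
  obtain ⟨c₀, hc₀⟩ := exists_code.1 hnat
  -- the search function
  set h : Code → ℕ → Option ℕ := fun c n =>
    (evaln n.unpair.1 c₀ n.unpair.2).bind
      (fun e => if Encodable.encode c < e.unpair.1 then some e.unpair.2 else none) with hh
  have hcomp : Computable₂ h := by
    have h1 : Primrec fun p : Code × ℕ => evaln p.2.unpair.1 c₀ p.2.unpair.2 :=
      primrec_evaln.comp
        (((Primrec.fst.comp (Primrec.unpair.comp Primrec.snd)).pair
          (Primrec.const c₀)).pair
          (Primrec.snd.comp (Primrec.unpair.comp Primrec.snd)))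
    have h2 : Primrec₂ fun (p : Code × ℕ) (e : ℕ) =>
        if Encodable.encode p.1 < e.unpair.1 then some e.unpair.2 else none := by
      refine Primrec.ite ?_ (Primrec.option_some.comp
        (Primrec.snd.comp (Primrec.unpair.comp Primrec.snd))) (Primrec.const none)
      exact Primrec.nat_lt.comp (Primrec.encode.comp (Primrec.fst.comp Primrec.fst))
        (Primrec.fst.comp (Primrec.unpair.comp Primrec.snd))
    exact (Primrec.option_bind h1 h2).to_comp
  have hG : Partrec fun c => Nat.rfindOpt (h c) := Partrec.rfindOpt hcomp
  have hF : Partrec₂ fun (c : Code) (_ : ℕ) => Nat.rfindOpt (h c) :=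
    hG.comp Computable.fst
  obtain ⟨c, hc⟩ := fixed_point₂ hF
  set b := Encodable.encode c with hb
  -- from unboundedness, the search succeeds
  obtain ⟨p, hpW, hpb⟩ := hB b
  obtain ⟨n, hpn⟩ := hpW
  have hpe : Encodable.encode p ∈ eval c₀ n := by
    rw [hc₀]; exact Part.mem_map _ hpn
  obtain ⟨k, hk⟩ := evaln_complete.1 hpe
  have hdom : (Nat.rfindOpt (h c)).Dom := by
    refine Nat.rfindOpt_dom.2 ⟨Nat.pair k n, p.2, ?_⟩
    simp only [hh, Nat.unpair_pair]
    rw [hk]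
    have : (Encodable.encode p).unpair = (p.1, p.2) := by
      show (Nat.pair p.1 p.2).unpair = _
      simp
    simp [this, ← hb, hpb]
  set x := (Nat.rfindOpt (h c)).get hdom with hx
  have hxmem : x ∈ Nat.rfindOpt (h c) := Part.get_mem hdom
  -- x is output of code c on input 0, so Kol x ≤ b
  have hx0 : x ∈ eval c 0 := by rw [hc]; exact hxmem
  have hKol : Kol x ≤ b := by
    apply Nat.sInf_le
    show (Denumerable.ofNat Code b).eval 0 = Part.some x
    rw [hb, Denumerable.ofNat_encode]
    exact Part.eq_some_iff.2 hx0
  -- but x comes from a pair in W with first coordinate > b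
  obtain ⟨m, hm⟩ := Nat.rfindOpt_spec hxmem
  simp only [hh, Option.mem_def, Option.bind_eq_some_iff] at hm
  obtain ⟨e, he, hcond⟩ := hm
  have heval : e ∈ eval c₀ m.unpair.2 := evaln_sound he
  rw [hc₀] at heval
  obtain ⟨q, hq, hqe⟩ := (Part.mem_map_iff _).1 heval
  have hqW : q ∈ {p | ∃ n, p ∈ f₀ n} := ⟨_, hq⟩
  have hqu : e.unpair = (q.1, q.2) := by
    rw [← hqe]; show (Nat.pair q.1 q.2).unpair = _; simp
  split_ifs at hcond with hlt
  have hq1 : b < q.1 := by rwa [hqu] at hlt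
  have hq2 : q.2 = x := by
    rw [hqu] at hcond; exact Option.some_injective _ hcond
  have := hW q hqW
  rw [hq2] at this
  omega

end NumbersExtensions
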